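/- For any real matrix X partitioned in block form as X = [[A, B], [C, D]], where A and D are (not necessarily square) diagonal blocks, one has ‖X‖_* ≥ ‖A‖_* + ‖D‖_*. -/

import Mathlib

open Matrix

theorem Matrix.isHermitian_transpose_mul_self {m n α : Type*} [Fintype m] [CommSemiring α]
    [StarRing α] [TrivialStar α] (A : Matrix m n α) : (Aᵀ * A).IsHermitian := by
  rw [IsHermitian, conjTranspose_mul, conjTranspose_eq_transpose_of_trivial,
    conjTranspose_eq_transpose_of_trivial, transpose_transpose]

/-- The nuclear norm of a real matrix: the sum of its singular values,
i.e. the sum of the square roots of the eigenvalues of `Xᵀ * X`. -/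
noncomputable def nuclearNorm {m n : Type*} [Fintype m] [Fintype n] [DecidableEq n]
    (X : Matrix m n ℝ) : ℝ :=
  ∑ i, Real.sqrt ((Matrix.isHermitian_transpose_mul_self X).eigenvalues i)

section Helpers

variable {m n : Type*} [Fintype m] [Fintype n] [DecidableEq n]

/-- Parseval-type identity from a "complete" family. -/
private lemma sum_dot {v : n → n → ℝ}
    (h : ∀ a b, ∑ k, v k a * v k b = if a = b then (1:ℝ) else 0)
    (f g : n → ℝ) : (∑ k, (f ⬝ᵥ v k) * (g ⬝ᵥ v k)) = f ⬝ᵥ g := by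
  have step : ∀ k, (f ⬝ᵥ v k) * (g ⬝ᵥ v k)
      = ∑ a, ∑ b, (f a * g b) * (v k a * v k b) := by
    intro k
    rw [dotProduct, dotProduct, Finset.sum_mul_sum]
    exact Finset.sum_congr rfl fun a _ => Finset.sum_congr rfl fun b _ => by ring
  simp_rw [step]
  rw [Finset.sum_comm]
  have : ∀ a, ∑ k, ∑ b, (f a * g b) * (v k a * v k b)
      = f a * g a := by
    intro a
    rw [Finset.sum_comm]
    have : ∀ b, ∑ k, (f a * g b) * (v k a * v k b) = f a * g b * (if a = b then (1:ℝ) else 0) := by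
      intro b
      rw [← Finset.mul_sum, h]
    simp_rw [this]
    simp [Finset.sum_ite_eq]
  simp_rw [this]
  rfl

/-- The packaged spectral data of `Xᴴ * X`. -/
private lemma exists_basis (X : Matrix m n ℝ) : ∃ v : n → n → ℝ, ∃ lam : n → ℝ,
    (∀ a b, ∑ k, v k a * v k b = if a = b then (1:ℝ) else 0) ∧
    (∀ k l, v k ⬝ᵥ v l = if k = l then (1:ℝ) else 0) ∧
    (∀ k l, (X *ᵥ v k) ⬝ᵥ (X *ᵥ v l) = if k = l then lam k else 0) ∧
    (∀ k, 0 ≤ lam k) ∧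
    nuclearNorm X = ∑ k, Real.sqrt (lam k) := by
  have hH := Matrix.isHermitian_transpose_mul_self X
  refine ⟨fun k => ⇑(hH.eigenvectorBasis k), hH.eigenvalues, ?_, ?_, ?_, ?_, rfl⟩
  · -- completeness from V * star V = 1
    intro a b
    have h1 : (hH.eigenvectorUnitary : Matrix n n ℝ) * star (hH.eigenvectorUnitary : Matrix n n ℝ)
        = 1 := Matrix.mem_unitaryGroup_iff.mp (hH.eigenvectorUnitary).2
    have := congrFun (congrFun h1 a) b
    simpa [Matrix.mul_apply, Matrix.one_apply, Matrix.star_apply,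
      Matrix.IsHermitian.eigenvectorUnitary_apply] using this
  · -- orthonormality
    intro k l
    have := orthonormal_iff_ite.mp hH.eigenvectorBasis.orthonormal k l
    simpa [PiLp.inner_apply, RCLike.inner_apply, dotProduct, mul_comm] using this
  · -- Gram identity
    intro k l
    have key : (X *ᵥ ⇑(hH.eigenvectorBasis k)) ⬝ᵥ (X *ᵥ ⇑(hH.eigenvectorBasis l))
        = ⇑(hH.eigenvectorBasis k) ⬝ᵥ ((Xᴴ * X) *ᵥ ⇑(hH.eigenvectorBasis l)) := by
      rw [← Matrix.mulVec_mulVec, Matrix.dotProduct_mulVec (A := Xᴴ)]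
      simp [Matrix.conjTranspose_eq_transpose_of_trivial, Matrix.vecMul_transpose]
    rw [key, Matrix.conjTranspose_eq_transpose_of_trivial, hH.mulVec_eigenvectorBasis, dotProduct_smul]
    have := orthonormal_iff_ite.mp hH.eigenvectorBasis.orthonormal k l
    have h2 : ⇑(hH.eigenvectorBasis k) ⬝ᵥ ⇑(hH.eigenvectorBasis l)
        = if k = l then (1:ℝ) else 0 := by
      simpa [PiLp.inner_apply, RCLike.inner_apply, dotProduct, mul_comm] using this
    rw [smul_eq_mul, h2]
    rcases eq_or_ne k l with rfl | hkl
    · simp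
    · simp [hkl]
  · exact fun k => Matrix.eigenvalues_conjTranspose_mul_self_nonneg X k

end Helpers

section Duality

variable {m n : Type*} [Fintype m] [Fintype n] [DecidableEq n]

private lemma dot_le_sqrt (a b : m → ℝ) :
    a ⬝ᵥ b ≤ Real.sqrt (a ⬝ᵥ a) * Real.sqrt (b ⬝ᵥ b) := by
  have h2 : (a ⬝ᵥ b) ^ 2 ≤ (a ⬝ᵥ a) * (b ⬝ᵥ b) := by
    simpa [dotProduct, sq] using
      Finset.sum_mul_sq_le_sq_mul_sq Finset.univ a b
  have ha : 0 ≤ a ⬝ᵥ a := Finset.sum_nonneg fun i _ => mul_self_nonneg _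
  calc a ⬝ᵥ b ≤ |a ⬝ᵥ b| := le_abs_self _
    _ = Real.sqrt ((a ⬝ᵥ b) ^ 2) := (Real.sqrt_sq_eq_abs _).symm
    _ ≤ Real.sqrt ((a ⬝ᵥ a) * (b ⬝ᵥ b)) := Real.sqrt_le_sqrt h2
    _ = _ := Real.sqrt_mul ha _

private lemma nuclear_ub (X U : Matrix m n ℝ)
    (hU : ∀ w : n → ℝ, (U *ᵥ w) ⬝ᵥ (U *ᵥ w) ≤ w ⬝ᵥ w) :
    (∑ j, ∑ i, U j i * X j i) ≤ nuclearNorm X := by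
  obtain ⟨v, lam, hcomp, hon, hXv, hnn, hnorm⟩ := exists_basis X
  have expand : (∑ j, ∑ i, U j i * X j i) = ∑ k, (U *ᵥ v k) ⬝ᵥ (X *ᵥ v k) :=
    calc (∑ j, ∑ i, U j i * X j i)
        = ∑ j, ∑ k, ((fun i => U j i) ⬝ᵥ v k) * ((fun i => X j i) ⬝ᵥ v k) :=
          Finset.sum_congr rfl fun j _ => (sum_dot hcomp (fun i => U j i) (fun i => X j i)).symm
      _ = ∑ k, ∑ j, ((fun i => U j i) ⬝ᵥ v k) * ((fun i => X j i) ⬝ᵥ v k) := Finset.sum_comm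
      _ = ∑ k, (U *ᵥ v k) ⬝ᵥ (X *ᵥ v k) := rfl
  rw [expand, hnorm]
  refine Finset.sum_le_sum fun k _ => ?_
  have h1 : (U *ᵥ v k) ⬝ᵥ (X *ᵥ v k)
      ≤ Real.sqrt ((U *ᵥ v k) ⬝ᵥ (U *ᵥ v k)) * Real.sqrt ((X *ᵥ v k) ⬝ᵥ (X *ᵥ v k)) :=
    dot_le_sqrt _ _
  have h2 : Real.sqrt ((U *ᵥ v k) ⬝ᵥ (U *ᵥ v k)) ≤ 1 := by
    have h := hU (v k)
    have hvk : v k ⬝ᵥ v k = 1 := by simpa using hon k k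
    rw [hvk] at h
    calc Real.sqrt ((U *ᵥ v k) ⬝ᵥ (U *ᵥ v k)) ≤ Real.sqrt 1 := Real.sqrt_le_sqrt h
      _ = 1 := Real.sqrt_one
  have h3 : (X *ᵥ v k) ⬝ᵥ (X *ᵥ v k) = lam k := by simpa using hXv k k
  calc (U *ᵥ v k) ⬝ᵥ (X *ᵥ v k)
      ≤ Real.sqrt ((U *ᵥ v k) ⬝ᵥ (U *ᵥ v k)) * Real.sqrt (lam k) := by rw [← h3]; exact h1
    _ ≤ 1 * Real.sqrt (lam k) := mul_le_mul_of_nonneg_right h2 (Real.sqrt_nonneg _)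
    _ = Real.sqrt (lam k) := one_mul _

private lemma nuclear_attain (X : Matrix m n ℝ) : ∃ U : Matrix m n ℝ,
    (∀ w : n → ℝ, (U *ᵥ w) ⬝ᵥ (U *ᵥ w) ≤ w ⬝ᵥ w) ∧
    (∑ j, ∑ i, U j i * X j i) = nuclearNorm X := by
  obtain ⟨v, lam, hcomp, hon, hXv, hnn, hnorm⟩ := exists_basis X
  set u : n → m → ℝ :=
    fun k => if lam k = 0 then 0 else (Real.sqrt (lam k))⁻¹ • (X *ᵥ v k) with hu
  have hsq : ∀ k, lam k ≠ 0 → Real.sqrt (lam k) * Real.sqrt (lam k) = lam k :=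
    fun k _ => Real.mul_self_sqrt (hnn k)
  have hsqne : ∀ k, lam k ≠ 0 → Real.sqrt (lam k) ≠ 0 := by
    intro k hk
    exact Real.sqrt_ne_zero'.mpr (lt_of_le_of_ne (hnn k) (Ne.symm hk))
  have huu : ∀ k l, u k ⬝ᵥ u l = if k = l then (if lam k = 0 then 0 else 1) else 0 := by
    intro k l
    by_cases hk : lam k = 0
    · simp [hu, hk]
    · by_cases hl : lam l = 0
      · have hkl : k ≠ l := fun h => hk (h ▸ hl)
        simp [hu, hk, hl, hkl]
      · simp only [hu, if_neg hk, if_neg hl, smul_dotProduct, dotProduct_smul, smul_eq_mul]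
        rw [hXv k l]
        rcases eq_or_ne k l with rfl | hkl
        · simp only [if_pos rfl, if_neg hk]
          rw [← hsq k hk]
          have h := hsqne k hk
          field_simp
          simp
        · simp [hkl]
  refine ⟨Matrix.of (fun j i => ∑ k, u k j * v k i), ?_, ?_⟩
  · intro w
    have hUw : ∀ j, (Matrix.of (fun j i => ∑ k, u k j * v k i) *ᵥ w) j
        = ∑ k, (v k ⬝ᵥ w) * u k j := by
      intro j
      show (∑ i, (∑ k, u k j * v k i) * w i) = _
      simp_rw [Finset.sum_mul]
      rw [Finset.sum_comm]
      refine Finset.sum_congr rfl fun k _ => ?_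
      rw [dotProduct, Finset.sum_mul]
      exact Finset.sum_congr rfl fun i _ => by ring
    have expand : (Matrix.of (fun j i => ∑ k, u k j * v k i) *ᵥ w) ⬝ᵥ
        (Matrix.of (fun j i => ∑ k, u k j * v k i) *ᵥ w)
        = ∑ k, ∑ l, ((v k ⬝ᵥ w) * (v l ⬝ᵥ w)) * (u k ⬝ᵥ u l) := by
      set c : n → ℝ := fun k => v k ⬝ᵥ w with hc
      rw [dotProduct]
      simp_rw [hUw]
      calc (∑ j, (∑ k, c k * u k j) * (∑ l, c l * u l j))
          = ∑ j, ∑ k, ∑ l, (c k * c l) * (u k j * u l j) := by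
            refine Finset.sum_congr rfl fun j _ => ?_
            rw [Finset.sum_mul_sum]
            exact Finset.sum_congr rfl fun k _ => Finset.sum_congr rfl fun l _ => by ring
        _ = ∑ k, ∑ j, ∑ l, (c k * c l) * (u k j * u l j) := Finset.sum_comm
        _ = ∑ k, ∑ l, ∑ j, (c k * c l) * (u k j * u l j) :=
            Finset.sum_congr rfl fun k _ => Finset.sum_comm
        _ = ∑ k, ∑ l, (c k * c l) * (u k ⬝ᵥ u l) := by
            refine Finset.sum_congr rfl fun k _ => Finset.sum_congr rfl fun l _ => ?_
            rw [dotProduct, Finset.mul_sum]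
    rw [expand]
    have diag : ∀ k, (∑ l, ((v k ⬝ᵥ w) * (v l ⬝ᵥ w)) * (u k ⬝ᵥ u l))
        = (v k ⬝ᵥ w) * (v k ⬝ᵥ w) * (if lam k = 0 then 0 else 1) := by
      intro k
      simp_rw [huu k, mul_ite, mul_zero]
      simp [Finset.sum_ite_eq]
    simp_rw [diag]
    have parseval : (∑ k, (v k ⬝ᵥ w) * (v k ⬝ᵥ w)) = w ⬝ᵥ w := by
      have := sum_dot hcomp w w
      simpa [dotProduct_comm] using this
    calc (∑ k, (v k ⬝ᵥ w) * (v k ⬝ᵥ w) * (if lam k = 0 then 0 else 1))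
        ≤ ∑ k, (v k ⬝ᵥ w) * (v k ⬝ᵥ w) := by
          refine Finset.sum_le_sum fun k _ => ?_
          by_cases hk : lam k = 0
          · simp [hk, mul_self_nonneg]
          · simp [hk]
      _ = w ⬝ᵥ w := parseval
  · have expand : (∑ j, ∑ i, (Matrix.of (fun j i => ∑ k, u k j * v k i)) j i * X j i)
        = ∑ k, u k ⬝ᵥ (X *ᵥ v k) := by
      calc (∑ j, ∑ i, (∑ k, u k j * v k i) * X j i)
          = ∑ j, ∑ k, u k j * ((X *ᵥ v k) j) := by
            refine Finset.sum_congr rfl fun j _ => ?_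
            simp_rw [Finset.sum_mul]
            rw [Finset.sum_comm]
            refine Finset.sum_congr rfl fun k _ => ?_
            show _ = u k j * ∑ i, X j i * v k i
            rw [Finset.mul_sum]
            exact Finset.sum_congr rfl fun i _ => by ring
        _ = ∑ k, ∑ j, u k j * ((X *ᵥ v k) j) := Finset.sum_comm
        _ = ∑ k, u k ⬝ᵥ (X *ᵥ v k) := rfl
    rw [expand, hnorm]
    refine Finset.sum_congr rfl fun k _ => ?_
    by_cases hk : lam k = 0
    · simp [hu, hk]
    · have h3 : (X *ᵥ v k) ⬝ᵥ (X *ᵥ v k) = lam k := by simpa using hXv k k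
      simp only [hu, if_neg hk, smul_dotProduct, smul_eq_mul, h3]
      field_simp
      exact Real.div_sqrt

end Duality

/-- For a block-partitioned matrix `X = [[A, B], [C, D]]`,
`‖X‖_* ≥ ‖A‖_* + ‖D‖_*`. -/
theorem stmt4 (p₁ p₂ q₁ q₂ : ℕ)
    (A : Matrix (Fin p₁) (Fin q₁) ℝ) (B : Matrix (Fin p₁) (Fin q₂) ℝ)
    (C : Matrix (Fin p₂) (Fin q₁) ℝ) (D : Matrix (Fin p₂) (Fin q₂) ℝ) :
    nuclearNorm A + nuclearNorm D ≤ nuclearNorm (Matrix.fromBlocks A B C D) := by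
  obtain ⟨UA, hUA, hvA⟩ := nuclear_attain A
  obtain ⟨UD, hUD, hvD⟩ := nuclear_attain D
  set U := Matrix.fromBlocks UA 0 0 UD with hUdef
  have hcontr : ∀ w : (Fin q₁ ⊕ Fin q₂) → ℝ, (U *ᵥ w) ⬝ᵥ (U *ᵥ w) ≤ w ⬝ᵥ w := by
    intro w
    have hw : w = Sum.elim (w ∘ Sum.inl) (w ∘ Sum.inr) := (Sum.elim_comp_inl_inr w).symm
    rw [hw, hUdef, Matrix.fromBlocks_mulVec]
    simp only [Matrix.zero_mulVec, add_zero, zero_add]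
    rw [sumElim_dotProduct_sumElim, sumElim_dotProduct_sumElim]
    exact add_le_add (hUA _) (hUD _)
  have hval : (∑ j, ∑ i, U j i * (Matrix.fromBlocks A B C D) j i)
      = nuclearNorm A + nuclearNorm D := by
    rw [← hvA, ← hvD]
    simp only [hUdef, Fintype.sum_sum_type]
    simp [Matrix.fromBlocks]
  calc nuclearNorm A + nuclearNorm D
      = ∑ j, ∑ i, U j i * (Matrix.fromBlocks A B C D) j i := hval.symm
    _ ≤ nuclearNorm (Matrix.fromBlocks A B C D) := nuclear_ub _ _ hcontr
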